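/- Let G = (V, E, R, c) be a relational hypergraph. For every L ≥ 0 there exist an initial feature map x : V → R^{d(0)} with c ≡ x and an HR-MPNN with L layers computing feature maps h^(ℓ) such that for all 0 ≤ ℓ ≤ L, hrwl_1^(ℓ) ≡ h^(ℓ) (the WL coloring and the feature map induce the same partition of V at every layer). -/

import Mathlib

/-- A relational hypergraph over node set `V`, relation types `R` with arities `ar`.
A hyperedge (fact) `r(u₁,…,u_k)` is a pair of a relation type `r` and the tuple of
its nodes, of length `k = ar r`. -/
structure RelHG (V R : Type) (ar : R → ℕ) where
  edges : Finset (Σ r : R, Fin (ar r) → V)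

variable {V R D : Type} {ar : R → ℕ}

/-- `E(v)`: the set of edge–position pairs `(e, i)` with `e(i) = v`. -/
def RelHG.incid [DecidableEq V] (H : RelHG V R ar) (v : V) :
    Finset (Σ e : Σ r : R, Fin (ar r) → V, Fin (ar e.1)) :=
  (H.edges.sigma fun e => (Finset.univ : Finset (Fin (ar e.1)))).filter
    fun p => p.1.2 p.2 = v

/-- Colors used by the canonical (`τ = id`) hypergraph relational 1-WL test after `ℓ`
rounds, starting from colors in `D`. -/
def WLC (D R : Type) : ℕ → Type :=
  fun ℓ => Nat.rec D (fun _ ih => ih × Multiset (Set (ih × ℕ) × R)) ℓ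

/-- The hypergraph relational 1-WL test `hrwl₁`, with the canonical injective `τ`
(pairing), starting from the node coloring `c`. -/
def RelHG.hrwl [DecidableEq V] (H : RelHG V R ar) (c : V → D) :
    (ℓ : ℕ) → V → WLC D R ℓ
  | 0 => c
  | ℓ + 1 => fun v =>
      ⟨RelHG.hrwl H c ℓ v,
        (H.incid v).val.map fun ei =>
          ({p : WLC D R ℓ × ℕ |
              ∃ j : Fin (ar ei.1.1), j ≠ ei.2 ∧
                p = (RelHG.hrwl H c ℓ (ei.1.2 j), (j : ℕ))},
            ei.1.1)⟩

/-- A hypergraph relational MPNN (HR-MPNN): layer dimensions `d`, message spaces `M`,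
aggregation spaces `A`, and arbitrary relation-specific message, aggregation and
update functions for every layer. -/
structure HRMPNN (R : Type) where
  d : ℕ → ℕ
  M : ℕ → Type
  A : ℕ → Type
  msg : (ℓ : ℕ) → R → Set ((Fin (d ℓ) → ℝ) × ℕ) → M ℓ
  agg : (ℓ : ℕ) → (Fin (d ℓ) → ℝ) → Multiset (M ℓ) → A ℓ
  up : (ℓ : ℕ) → (Fin (d ℓ) → ℝ) → A ℓ → Fin (d (ℓ + 1)) → ℝ

/-- The feature maps `h⁽ℓ⁾` computed by an HR-MPNN on a relational hypergraph `H`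
from the initial feature map `x`. -/
def HRMPNN.h [DecidableEq V] (net : HRMPNN R) (H : RelHG V R ar)
    (x : V → Fin (net.d 0) → ℝ) : (ℓ : ℕ) → V → Fin (net.d ℓ) → ℝ
  | 0 => x
  | ℓ + 1 => fun v =>
      net.up ℓ (HRMPNN.h net H x ℓ v)
        (net.agg ℓ (HRMPNN.h net H x ℓ v)
          ((H.incid v).val.map fun ei =>
            net.msg ℓ ei.1.1
              {p : (Fin (net.d ℓ) → ℝ) × ℕ |
                ∃ j : Fin (ar ei.1.1), j ≠ ei.2 ∧
                  p = (HRMPNN.h net H x ℓ (ei.1.2 j), (j : ℕ))}))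

/-- Real encoding of the WL color class of `v` at round `ℓ`: the least index (via
`Fintype.equivFin`) of a node in the same WL class. -/
noncomputable def tgt [Fintype V] [DecidableEq V] (H : RelHG V R ar) (c : V → D)
    (ℓ : ℕ) (v : V) : ℝ :=
  ((sInf {n : ℕ | ∃ u : V, H.hrwl c ℓ u = H.hrwl c ℓ v ∧
      ((Fintype.equivFin V) u : ℕ) = n}) : ℕ)

lemma tgt_eq_iff [Fintype V] [DecidableEq V] (H : RelHG V R ar) (c : V → D)
    (ℓ : ℕ) (u v : V) :
    tgt H c ℓ u = tgt H c ℓ v ↔ H.hrwl c ℓ u = H.hrwl c ℓ v := by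
  constructor
  · intro h
    have h' : sInf {n : ℕ | ∃ w : V, H.hrwl c ℓ w = H.hrwl c ℓ u ∧
          ((Fintype.equivFin V) w : ℕ) = n}
        = sInf {n : ℕ | ∃ w : V, H.hrwl c ℓ w = H.hrwl c ℓ v ∧
          ((Fintype.equivFin V) w : ℕ) = n} := by
      unfold tgt at h
      exact_mod_cast h
    have hu := Nat.sInf_mem (s := {n : ℕ | ∃ w : V, H.hrwl c ℓ w = H.hrwl c ℓ u ∧
          ((Fintype.equivFin V) w : ℕ) = n}) ⟨_, u, rfl, rfl⟩
    have hv := Nat.sInf_mem (s := {n : ℕ | ∃ w : V, H.hrwl c ℓ w = H.hrwl c ℓ v ∧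
          ((Fintype.equivFin V) w : ℕ) = n}) ⟨_, v, rfl, rfl⟩
    obtain ⟨w1, hw1, hn1⟩ := hu
    obtain ⟨w2, hw2, hn2⟩ := hv
    have : w1 = w2 := by
      have : ((Fintype.equivFin V) w1 : ℕ) = ((Fintype.equivFin V) w2 : ℕ) := by
        rw [hn1, hn2, h']
      exact (Fintype.equivFin V).injective (Fin.ext this)
    rw [← hw1, this, hw2]
  · intro h
    unfold tgt
    rw [h]

/-- The multiset of (target-encoded) messages received by `v` at layer `ℓ`. -/
noncomputable def aggM [Fintype V] [DecidableEq V] (H : RelHG V R ar) (c : V → D)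
    (ℓ : ℕ) (v : V) : Multiset (Set ((Fin 1 → ℝ) × ℕ) × R) :=
  (H.incid v).val.map fun ei =>
    ({p : (Fin 1 → ℝ) × ℕ |
        ∃ j : Fin (ar ei.1.1), j ≠ ei.2 ∧
          p = ((fun _ => tgt H c ℓ (ei.1.2 j)), (j : ℕ))},
      ei.1.1)

/-- Key injectivity: the layer-`ℓ` encoded state plus encoded aggregate determine the
round-`ℓ+1` WL color. -/
lemma key [Fintype V] [DecidableEq V] (H : RelHG V R ar) (c : V → D) (ℓ : ℕ)
    (u v : V) (h1 : tgt H c ℓ u = tgt H c ℓ v) (h2 : aggM H c ℓ u = aggM H c ℓ v) :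
    H.hrwl c (ℓ + 1) u = H.hrwl c (ℓ + 1) v := by
  have hwl : H.hrwl c ℓ u = H.hrwl c ℓ v := (tgt_eq_iff H c ℓ u v).1 h1
  -- decoder on sets of encoded pairs
  set F : Set ((Fin 1 → ℝ) × ℕ) → Set (WLC D R ℓ × ℕ) :=
    fun S => {q | ∃ w : V, ((fun _ => tgt H c ℓ w), q.2) ∈ S ∧ q.1 = H.hrwl c ℓ w}
    with hF
  have hdec : ∀ w : V, (H.incid w).val.map
      (fun ei => ({p : WLC D R ℓ × ℕ |
          ∃ j : Fin (ar ei.1.1), j ≠ ei.2 ∧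
            p = (H.hrwl c ℓ (ei.1.2 j), (j : ℕ))}, ei.1.1))
      = (aggM H c ℓ w).map (fun p => (F p.1, p.2)) := by
    intro w
    rw [aggM, Multiset.map_map]
    apply Multiset.map_congr rfl
    intro ei _
    simp only [Function.comp_apply]
    congr 1
    ext q
    constructor
    · rintro ⟨j, hj, rfl⟩
      exact ⟨ei.1.2 j, ⟨j, hj, rfl⟩, rfl⟩
    · rintro ⟨w', ⟨j, hj, hpe⟩, hq1⟩
      have h1' : (fun _ => tgt H c ℓ w' : Fin 1 → ℝ) = fun _ => tgt H c ℓ (ei.1.2 j) :=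
        congrArg Prod.fst hpe
      have h2' : q.2 = (j : ℕ) := congrArg Prod.snd hpe
      have : tgt H c ℓ w' = tgt H c ℓ (ei.1.2 j) := congrFun h1' 0
      have hww : H.hrwl c ℓ w' = H.hrwl c ℓ (ei.1.2 j) := (tgt_eq_iff H c ℓ _ _).1 this
      exact ⟨j, hj, Prod.ext (by rw [hq1, hww]) h2'⟩
  show (⟨H.hrwl c ℓ u, _⟩ : WLC D R ℓ × Multiset (Set (WLC D R ℓ × ℕ) × R)) = ⟨H.hrwl c ℓ v, _⟩
  refine (Prod.mk.injEq _ _ _ _).mpr ?_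
  exact ⟨hwl, (hdec u).trans (h2 ▸ (hdec v).symm)⟩

open Classical

/-- The simulating network: dimension 1 everywhere, messages and aggregates are kept
symbolically, and the update decodes the aggregate to the encoded next WL color. -/
noncomputable def mynet [Fintype V] [DecidableEq V] (H : RelHG V R ar) (c : V → D) :
    HRMPNN R where
  d := fun _ => 1
  M := fun _ => Set ((Fin 1 → ℝ) × ℕ) × R
  A := fun _ => (Fin 1 → ℝ) × Multiset (Set ((Fin 1 → ℝ) × ℕ) × R)
  msg := fun _ r S => (S, r)
  agg := fun _ h m => (h, m)
  up := fun ℓ h a =>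
    if hyp : ∃ w : V, h = (fun _ => tgt H c ℓ w) ∧
        a = ((fun _ => tgt H c ℓ w), aggM H c ℓ w) then
      fun _ => tgt H c (ℓ + 1) hyp.choose
    else fun _ => 0

lemma mynet_up [Fintype V] [DecidableEq V] (H : RelHG V R ar) (c : V → D)
    (ℓ : ℕ) (h : Fin 1 → ℝ) (a : (Fin 1 → ℝ) × Multiset (Set ((Fin 1 → ℝ) × ℕ) × R)) :
    (mynet H c).up ℓ h a =
      if hyp : ∃ w : V, h = (fun _ => tgt H c ℓ w) ∧
          a = ((fun _ => tgt H c ℓ w), aggM H c ℓ w) then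
        fun _ => tgt H c (ℓ + 1) hyp.choose
      else fun _ => 0 := rfl

lemma mynet_h [Fintype V] [DecidableEq V] (H : RelHG V R ar) (c : V → D)
    (ℓ : ℕ) (v : V) :
    (mynet H c).h H (fun v _ => tgt H c 0 v) ℓ v = fun _ => tgt H c ℓ v := by
  induction ℓ generalizing v with
  | zero => rfl
  | succ ℓ ih =>
    show (mynet H c).up ℓ _ _ = _
    have hmul : ((H.incid v).val.map fun ei =>
        (mynet H c).msg ℓ ei.1.1
          {p : (Fin ((mynet H c).d ℓ) → ℝ) × ℕ |
            ∃ j : Fin (ar ei.1.1), j ≠ ei.2 ∧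
              p = ((mynet H c).h H (fun v _ => tgt H c 0 v) ℓ (ei.1.2 j), (j : ℕ))})
        = aggM H c ℓ v := by
      rw [aggM]
      apply Multiset.map_congr rfl
      intro ei _
      simp only [ih]
      rfl
    rw [ih v]
    show (mynet H c).up ℓ (fun _ => tgt H c ℓ v) (((fun _ => tgt H c ℓ v), _)) = _
    rw [hmul]
    refine (mynet_up H c ℓ _ _).trans ?_
    split
    next hyp =>
      obtain ⟨he, ha⟩ := hyp.choose_spec
      have h1 : tgt H c ℓ hyp.choose = tgt H c ℓ v := (congrFun he ⟨0, Nat.one_pos⟩).symm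
      have h2 : aggM H c ℓ hyp.choose = aggM H c ℓ v := (congrArg Prod.snd ha).symm
      have := key H c ℓ hyp.choose v h1 h2
      funext i
      exact (tgt_eq_iff H c (ℓ + 1) hyp.choose v).2 this
    next hyp =>
      exact absurd ⟨v, rfl, rfl⟩ hyp


/-- Let `G = (V, E, R, c)` be a relational hypergraph. For every
`L ≥ 0` there exist an initial feature map `x` with `c ≡ x` and an HR-MPNN with `L`
layers such that for all `0 ≤ ℓ ≤ L`, `hrwl₁⁽ℓ⁾ ≡ h⁽ℓ⁾` (same partition of `V` at
every layer). -/
theorem exists_HRMPNN_matching_hrwl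
    {V R D : Type} [Fintype V] [DecidableEq V] [Fintype R] [DecidableEq R]
    {ar : R → ℕ} (H : RelHG V R ar) (c : V → D) (L : ℕ) :
    ∃ (net : HRMPNN R) (x : V → Fin (net.d 0) → ℝ),
      (∀ u v : V, c u = c v ↔ x u = x v) ∧
      ∀ ℓ ≤ L, ∀ u v : V,
        H.hrwl c ℓ u = H.hrwl c ℓ v ↔ net.h H x ℓ u = net.h H x ℓ v := by
  refine ⟨mynet H c, fun v _ => tgt H c 0 v, ?_, ?_⟩
  · intro u v
    have h0 : (c u = c v) ↔ tgt H c 0 u = tgt H c 0 v := (tgt_eq_iff H c 0 u v).symm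
    constructor
    · intro h; funext i; exact h0.1 h
    · intro h; exact h0.2 (congrFun h ⟨0, Nat.one_pos⟩)
  · intro ℓ _ u v
    rw [mynet_h H c ℓ u, mynet_h H c ℓ v, ← tgt_eq_iff H c ℓ u v]
    constructor
    · intro h; funext i; exact h
    · intro h; exact congrFun h ⟨0, Nat.one_pos⟩
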